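/- Let q = 2^s. The polynomials y^{q+1} - 1 and y^{q^2/2} + y^{q^2/4} + … + y^2 + y + 1 in 𝔽_2[y] have a nonconstant common factor over 𝔽_2; equivalently, there exists β ∈ 𝔽_{q^2} with β^{q+1} = 1 whose absolute trace to 𝔽_2 equals 1. Consequently there exists α in the algebraic closure of 𝔽_2 with α^{q^3+q^2+q+1} = 1 and (α+1)^{q^3+q^2+q+1} = 1. -/

import Mathlib

open Polynomial

-- Nat lemma: 2^d - 1 ∣ 2^m - 1 → d ∣ m  (for d > 0)
lemma aux_dvd_of_pow_sub_one_dvd {d m : ℕ} (hd : 0 < d) (h : 2 ^ d - 1 ∣ 2 ^ m - 1) : d ∣ m := by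
  set r := m % d with hr
  have hrd : r < d := Nat.mod_lt _ hd
  have hm : m = d * (m / d) + r := (Nat.div_add_mod m d).symm
  have h1 : 2 ^ d - 1 ∣ 2 ^ (d * (m / d)) - 1 := by
    simpa only [one_pow, pow_mul] using Nat.sub_dvd_pow_sub_pow (2 ^ d) 1 (m / d)
  have key : 2 ^ m - 1 = 2 ^ r * (2 ^ (d * (m / d)) - 1) + (2 ^ r - 1) := by
    have h2 : 1 ≤ 2 ^ (d * (m / d)) := Nat.one_le_two_pow
    have h3 : 1 ≤ 2 ^ r := Nat.one_le_two_pow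
    have hX : 2 ^ m = 2 ^ (d * (m / d)) * 2 ^ r := by rw [← pow_add, ← hm]
    have h4 : 1 ≤ 2 ^ m := Nat.one_le_two_pow
    have hXz : (2 ^ m : ℤ) = 2 ^ (d * (m / d)) * 2 ^ r := by exact_mod_cast hX
    zify [h2, h3, h4]
    linear_combination hXz
  have h4 : 2 ^ d - 1 ∣ 2 ^ r - 1 := by
    have := Nat.dvd_sub h (Dvd.dvd.mul_left h1 (2 ^ r))
    rwa [key, Nat.add_sub_cancel_left] at this
  have h5 : 2 ^ r - 1 = 0 := by
    by_contra h5
    have := Nat.le_of_dvd (Nat.pos_of_ne_zero h5) h4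
    have : 2 ^ r < 2 ^ d := Nat.pow_lt_pow_right one_lt_two hrd
    omega
  have h6 : 2 ^ r ≤ 1 := by omega
  have h7 : r = 0 := by
    by_contra h7
    have : 2 ^ 1 ≤ 2 ^ r := Nat.pow_le_pow_right (by norm_num) (Nat.one_le_iff_ne_zero.mpr h7)
    omega
  exact Nat.dvd_of_mod_eq_zero (by omega)

namespace Stmt18

noncomputable section

abbrev F := AlgebraicClosure (ZMod 2)

/-- The "trace" additive map. -/
def T (s : ℕ) : F →ₗ[ZMod 2] F where
  toFun x := ∑ j ∈ Finset.range (2 * s), x ^ 2 ^ j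
  map_add' x y := by
    rw [← Finset.sum_add_distrib]
    exact Finset.sum_congr rfl fun j _ => add_pow_char_pow x y 2 j
  map_smul' m x := by
    obtain rfl | rfl : m = 0 ∨ m = 1 := (by decide : ∀ m : ZMod 2, m = 0 ∨ m = 1) m
    · simp only [zero_smul, RingHom.id_apply]
      simp [zero_pow (Nat.two_pow_pos _).ne']
    · simp

set_option maxHeartbeats 1600000 in
set_option synthInstance.maxHeartbeats 400000 in
lemma exists_beta (s : ℕ) (hs : 1 ≤ s) :
    ∃ β : F, β ^ (2 ^ s + 1) = 1 ∧ ∑ j ∈ Finset.range (2 * s), β ^ 2 ^ j = 1 := by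
  classical
  set q : ℕ := 2 ^ s with hq
  have hq1 : 1 ≤ q := Nat.one_le_two_pow
  have htwo : (2 : F) = 0 := by exact_mod_cast CharP.cast_eq_zero F 2
  haveI : NeZero ((q + 1 : ℕ) : F) := by
    constructor
    have h1 : ((q + 1 : ℕ) : F) = 1 := by
      push_cast
      rw [hq]
      push_cast
      rw [htwo, zero_pow (by omega : s ≠ 0), zero_add]
    rw [h1]; exact one_ne_zero
  obtain ⟨ζ, hζ⟩ := HasEnoughRootsOfUnity.exists_primitiveRoot F (q + 1)
  by_contra hcon
  push_neg at hcon
  -- every (q+1)-st root of unity is fixed by x ↦ x^(q^2)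
  have hfix : ∀ β : F, β ^ (q + 1) = 1 → β ^ q ^ 2 = β := by
    intro β hβ
    obtain ⟨t, ht⟩ : ∃ t, q = t + 1 := ⟨q - 1, by omega⟩
    have hexp : q ^ 2 = (q + 1) * t + 1 := by rw [ht]; ring
    rw [hexp, pow_succ, pow_mul, hβ, one_pow, one_mul]
  -- every (q+1)-st root of unity has T = 0
  have hTval : ∀ β : F, β ^ (q + 1) = 1 → T s β = 0 := by
    intro β hβ
    have hsum : T s β = ∑ j ∈ Finset.range (2 * s), β ^ 2 ^ j := rfl
    have hsq : T s β * T s β = T s β := by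
      have h2 : T s β * T s β = ∑ j ∈ Finset.range (2 * s), β ^ 2 ^ (j + 1) := by
        rw [hsum, ← pow_two, sum_pow_char]
        exact Finset.sum_congr rfl fun j _ => by
          rw [← pow_mul, pow_succ, mul_comm]
      have e1 := Finset.sum_range_succ (fun j => β ^ 2 ^ j) (2 * s)
      have e2 := Finset.sum_range_succ' (fun j => β ^ 2 ^ j) (2 * s)
      have hβfix : β ^ 2 ^ (2 * s) = β := by
        have : (2 : ℕ) ^ (2 * s) = q ^ 2 := by rw [hq, ← pow_mul, mul_comm]
        rw [this]; exact hfix β hβ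
      have e3 : (∑ j ∈ Finset.range (2 * s), β ^ 2 ^ (j + 1)) + β
          = (∑ j ∈ Finset.range (2 * s), β ^ 2 ^ j) + β := by
        calc (∑ j ∈ Finset.range (2 * s), β ^ 2 ^ (j + 1)) + β
            = ∑ j ∈ Finset.range (2 * s + 1), β ^ 2 ^ j := by
              rw [e2]; simp
          _ = (∑ j ∈ Finset.range (2 * s), β ^ 2 ^ j) + β := by rw [e1, hβfix]
      rw [← h2, ← hsum] at e3
      exact add_right_cancel e3
    have h01 : T s β = 0 ∨ T s β = 1 := by
      have : T s β * (T s β - 1) = 0 := by rw [mul_sub, mul_one, hsq, sub_self]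
      rcases mul_eq_zero.mp this with h | h
      · exact Or.inl h
      · exact Or.inr (by linear_combination h)
    rcases h01 with h | h
    · exact h
    · exact absurd (hsum ▸ h : ∑ j ∈ Finset.range (2 * s), β ^ 2 ^ j = 1)
        (by simpa using hcon β hβ)
  -- the span of the powers of ζ
  set S : Set F := Set.range (fun n : ℕ => ζ ^ n) with hS
  set V : Submodule (ZMod 2) F := Submodule.span (ZMod 2) S with hV
  have hpow_unity : ∀ n : ℕ, (ζ ^ n) ^ (q + 1) = 1 := fun n => by
    rw [← pow_mul, mul_comm, pow_mul, hζ.pow_eq_one, one_pow]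
  have hVker : V ≤ LinearMap.ker (T s) := Submodule.span_le.mpr (by
    rintro x ⟨n, rfl⟩
    exact LinearMap.mem_ker.mpr (hTval _ (hpow_unity n)))
  have hVfix : ∀ x ∈ V, x ^ q ^ 2 = x := by
    intro x hx
    induction hx using Submodule.span_induction with
    | mem x h =>
      obtain ⟨n, rfl⟩ := h
      exact hfix _ (hpow_unity n)
    | zero => exact zero_pow (by positivity)
    | add x y hx hy ihx ihy =>
      have : q ^ 2 = 2 ^ (2 * s) := by rw [hq, ← pow_mul, mul_comm]
      rw [this] at ihx ihy ⊢
      rw [add_pow_char_pow x y 2 (2 * s), ihx, ihy]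
    | smul a x hx ih =>
      obtain rfl | rfl : a = 0 ∨ a = 1 := (by decide : ∀ m : ZMod 2, m = 0 ∨ m = 1) a
      · simp [zero_pow (by positivity : q ^ 2 ≠ 0)]
      · simpa using ih
  have hmulV : ∀ x ∈ V, ∀ y ∈ V, x * y ∈ V := by
    intro x hx y hy
    have hxy : x * y ∈ V * V := Submodule.mul_mem_mul hx hy
    rw [hV, Submodule.span_mul_span] at hxy
    refine Submodule.span_le.mpr ?_ hxy
    rintro z hz
    rcases Set.mem_mul.mp hz with ⟨a, ha, b, hb, rfl⟩
    obtain ⟨n, rfl⟩ := ha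
    obtain ⟨m, rfl⟩ := hb
    exact Submodule.subset_span ⟨n + m, by simp [pow_add]⟩
  have honeV : (1 : F) ∈ V := Submodule.subset_span ⟨0, pow_zero ζ⟩
  -- the polynomial vanishing on V
  set P : Polynomial F := ∑ j ∈ Finset.range (2 * s), Polynomial.X ^ 2 ^ j with hP
  have hPcoeff : P.coeff 1 = 1 := by
    rw [hP, finset_sum_coeff]
    rw [Finset.sum_eq_single 0]
    · simp
    · intro b _ hb
      have h2b : 2 ^ 1 ≤ 2 ^ b := Nat.pow_le_pow_right (by norm_num) (by omega)
      rw [pow_one] at h2b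
      rw [coeff_X_pow, if_neg (by omega)]
    · intro h
      exact absurd (Finset.mem_range.mpr (by omega)) h
  have hPne : P ≠ 0 := fun h0 => by simp [h0] at hPcoeff
  have hroots : ∀ x ∈ V, P.IsRoot x := by
    intro x hx
    have hker := LinearMap.mem_ker.mp (hVker hx)
    show P.eval x = 0
    rw [hP, Polynomial.eval_finset_sum]
    simp only [eval_pow, eval_X]
    exact hker
  have hfin : (V : Set F).Finite :=
    (Polynomial.finite_setOf_isRoot hPne).subset (fun x hx => hroots x hx)
  -- cardinality bound
  have hPdeg : P.natDegree ≤ 2 ^ (2 * s - 1) := by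
    rw [hP]
    refine natDegree_sum_le_of_forall_le _ _ (fun j hj => ?_)
    rw [natDegree_X_pow]
    exact Nat.pow_le_pow_right (by norm_num) (by
      have := Finset.mem_range.mp hj; omega)
  have hcardV : Nat.card V ≤ 2 ^ (2 * s - 1) := by
    have hsub : (V : Set F) ⊆ ↑P.roots.toFinset := fun x hx =>
      Multiset.mem_toFinset.mpr (Polynomial.mem_roots'.mpr ⟨hPne, hroots x hx⟩)
    calc Nat.card V = (V : Set F).ncard := (Nat.card_coe_set_eq _)
      _ ≤ (↑P.roots.toFinset : Set F).ncard := Set.ncard_le_ncard hsub (Set.finite_coe_iff.mp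
          (Set.Finite.to_subtype (P.roots.toFinset.finite_toSet)))
      _ = P.roots.toFinset.card := Set.ncard_coe_finset _
      _ ≤ Multiset.card P.roots := P.roots.toFinset_card_le
      _ ≤ P.natDegree := P.card_roots'
      _ ≤ 2 ^ (2 * s - 1) := hPdeg
  -- the subalgebra
  set A : Subalgebra (ZMod 2) F := V.toSubalgebra honeV (fun x y hx hy => hmulV x hx y hy)
    with hA
  have hmemA : ∀ x : F, x ∈ A ↔ x ∈ V := fun x => Iff.rfl
  haveI hfinV : Finite (V : Set F) := hfin.to_subtype
  haveI : Finite A := Finite.of_injective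
    (fun a => (⟨a.1, a.2⟩ : (V : Set F))) (fun a b h => Subtype.ext (congrArg Subtype.val h))
  have hfield : IsField A := Finite.isField_of_domain A
  letI : Field A := hfield.toField
  haveI : Finite Aˣ := inferInstance
  letI : Fintype A := Fintype.ofFinite A
  set d : ℕ := Module.finrank (ZMod 2) A with hd
  have hcardA : Nat.card A = 2 ^ d := by
    rw [Nat.card_eq_fintype_card, Module.card_eq_pow_finrank (K := ZMod 2) (V := A), ZMod.card]
  have hcardAV : Nat.card A = Nat.card V :=
    Nat.card_congr (Equiv.subtypeEquivRight (fun x => Iff.rfl))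
  have hcardU : Nat.card Aˣ = 2 ^ d - 1 := by rw [Nat.card_units, hcardA]
  -- ζ is a unit of A of order q+1
  have hζV : ζ ∈ V := Submodule.subset_span ⟨1, pow_one ζ⟩
  set ζA : A := ⟨ζ, hζV⟩ with hζA
  have hζApow : ζA ^ (q + 1) = 1 := by
    apply Subtype.ext
    push_cast [hζA]
    exact hζ.pow_eq_one
  have hζAunit : IsUnit ζA := IsUnit.of_mul_eq_one (a := ζA) (ζA ^ q) (by
    rw [← pow_succ']; exact hζApow)
  obtain ⟨u, hu⟩ := hζAunit
  have horderu : orderOf u = q + 1 := by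
    have h1 : orderOf u = orderOf ζA := by
      rw [← hu]; exact orderOf_units.symm
    have h2 : orderOf ζA = orderOf ζ :=
      (orderOf_injective (A.val : A →* F) Subtype.val_injective ζA).symm
    rw [h1, h2, ← hζ.eq_orderOf]
  have hdvd1 : q + 1 ∣ 2 ^ d - 1 := by
    rw [← hcardU, ← horderu]; exact orderOf_dvd_natCard u
  -- a generator of Aˣ gives 2^d - 1 ∣ q^2 - 1
  obtain ⟨g, hg⟩ := IsCyclic.exists_generator (α := Aˣ)
  have hgord : orderOf g = 2 ^ d - 1 := by
    rw [orderOf_eq_card_of_forall_mem_zpowers hg, hcardU]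
  have hdvd2 : 2 ^ d - 1 ∣ q ^ 2 - 1 := by
    set x : F := ((g : A) : F) with hx
    have hxV : x ∈ V := (g : A).2
    have hxfix : x ^ q ^ 2 = x := hVfix x hxV
    have hxne : x ≠ 0 := by
      intro h0
      have hinv : ((g : A) : F) * (((g⁻¹ : Aˣ) : A) : F) = 1 := by
        have := congrArg (Subtype.val) (congrArg (Units.val) (mul_inv_cancel g))
        push_cast at this
        exact_mod_cast this
      rw [← hx, h0, zero_mul] at hinv
      exact zero_ne_one hinv
    have hxq : x ^ (q ^ 2 - 1) = 1 := by
      have h1 : x ^ (q ^ 2 - 1) * x = 1 * x := by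
        rw [← pow_succ, Nat.sub_add_cancel (Nat.one_le_pow 2 q (by omega)), hxfix, one_mul]
      exact mul_right_cancel₀ hxne h1
    have hgA : (g : A) ^ (q ^ 2 - 1) = 1 := by
      apply Subtype.ext
      push_cast
      exact hxq
    have hgU : g ^ (q ^ 2 - 1) = 1 := by
      apply Units.ext
      push_cast [hgA]
      rfl
    rw [← hgord]
    exact orderOf_dvd_of_pow_eq_one hgU
  -- derive d = 2 * s
  have hUpos : 0 < Nat.card Aˣ := Nat.card_pos
  have hdpos : 0 < d := by
    have h2 := hUpos
    rw [hcardU] at h2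
    by_contra h0
    have hd0 : d = 0 := by omega
    rw [hd0] at h2
    norm_num at h2
  have hq2 : q ^ 2 = 2 ^ (2 * s) := by rw [hq, ← pow_mul, mul_comm]
  have hddvd : d ∣ 2 * s := aux_dvd_of_pow_sub_one_dvd hdpos (hq2 ▸ hdvd2)
  have hge : q + 1 ≤ 2 ^ d - 1 := Nat.le_of_dvd (by
    have h2 := hUpos; rw [hcardU] at h2; omega) hdvd1
  have hsd : s < d := by
    have h2 : 2 ^ s < 2 ^ d := by omega
    exact (Nat.pow_lt_pow_iff_right (by norm_num)).mp h2
  have hdeq : d = 2 * s := by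
    obtain ⟨k, hk⟩ := hddvd
    rcases Nat.lt_or_ge k 2 with hk2 | hk2
    · interval_cases k <;> omega
    · nlinarith
  -- contradiction
  rw [← hcardAV, hcardA, hdeq] at hcardV
  have : 2 ^ (2 * s - 1) < 2 ^ (2 * s) := Nat.pow_lt_pow_right (by norm_num) (by omega)
  omega

end

end Stmt18

set_option maxHeartbeats 800000 in
theorem stmt_18 (s : ℕ) (hs : 1 ≤ s) (q : ℕ) (hq : q = 2 ^ s) :
    (∃ h : Polynomial (ZMod 2), 0 < h.natDegree ∧
        h ∣ X ^ (q + 1) - 1 ∧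
        h ∣ 1 + ∑ j ∈ Finset.range (2 * s), X ^ 2 ^ j) ∧
    (∃ β : AlgebraicClosure (ZMod 2), β ^ (q + 1) = 1 ∧
        ∑ j ∈ Finset.range (2 * s), β ^ 2 ^ j = 1) ∧
    (∃ α : AlgebraicClosure (ZMod 2),
        α ^ (q ^ 3 + q ^ 2 + q + 1) = 1 ∧ (α + 1) ^ (q ^ 3 + q ^ 2 + q + 1) = 1) := by
  subst hq
  obtain ⟨β, hβ1, hβ2⟩ := Stmt18.exists_beta s hs
  have htwo : (2 : Stmt18.F) = 0 := by exact_mod_cast CharP.cast_eq_zero Stmt18.F 2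
  have hone : (1 : Stmt18.F) + 1 = 0 := by linear_combination htwo
  refine ⟨?_, ⟨β, hβ1, hβ2⟩, ?_⟩
  · -- common factor: the minimal polynomial of β
    have hint : IsIntegral (ZMod 2) β :=
      (Algebra.IsAlgebraic.isAlgebraic (R := ZMod 2) β).isIntegral
    refine ⟨minpoly (ZMod 2) β, minpoly.natDegree_pos hint, ?_, ?_⟩
    · apply minpoly.dvd
      rw [map_sub, map_pow, aeval_X, map_one, hβ1, sub_self]
    · apply minpoly.dvd
      rw [map_add, map_one, map_sum]
      simp only [map_pow, aeval_X]
      rw [hβ2, hone]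
  · -- construct α with α² + α = β
    set p : Polynomial Stmt18.F := X ^ 2 + (X + C β) with hp
    have hdeg : p.degree = 2 := by
      rw [hp]
      rw [degree_add_eq_left_of_degree_lt]
      · exact degree_X_pow 2
      · rw [degree_X_pow, Polynomial.degree_X_add_C]
        norm_num
    obtain ⟨α, hαroot⟩ := IsAlgClosed.exists_root p (by rw [hdeg]; norm_num)
    have hroot : α ^ 2 + (α + β) = 0 := by
      have := hαroot
      rw [hp] at this
      simpa [Polynomial.IsRoot] using this
    have hβα : α ^ 2 + α = β := by linear_combination hroot - β * htwo
    -- telescoping: α ^ (2 ^ (2s)) = α + 1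
    have hterm : ∀ j : ℕ, β ^ 2 ^ j = α ^ 2 ^ (j + 1) - α ^ 2 ^ j := by
      intro j
      rw [← hβα, add_pow_char_pow (α ^ 2) α 2 j, CharTwo.sub_eq_add, ← pow_mul,
        pow_succ, mul_comm 2 (2 ^ j)]
    have htel : α ^ 2 ^ (2 * s) - α = 1 := by
      have h1 := Finset.sum_range_sub (fun j => α ^ 2 ^ j) (2 * s)
      calc α ^ 2 ^ (2 * s) - α = α ^ 2 ^ (2 * s) - α ^ 2 ^ 0 := by norm_num
        _ = ∑ j ∈ Finset.range (2 * s), (α ^ 2 ^ (j + 1) - α ^ 2 ^ j) := h1.symm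
        _ = ∑ j ∈ Finset.range (2 * s), β ^ 2 ^ j := by
            exact Finset.sum_congr rfl fun j _ => (hterm j).symm
        _ = 1 := hβ2
    have hαq : α ^ ((2 ^ s) ^ 2) = α + 1 := by
      have h2 : ((2 : ℕ) ^ s) ^ 2 = 2 ^ (2 * s) := by rw [← pow_mul, mul_comm]
      rw [h2]
      linear_combination htel
    -- conclude
    refine ⟨α, ?_, ?_⟩
    · have hfact : (2 ^ s) ^ 3 + (2 ^ s) ^ 2 + 2 ^ s + 1
          = ((2 ^ s) ^ 2 + 1) * (2 ^ s + 1) := by ring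
      have hαβ : α ^ ((2 ^ s) ^ 2 + 1) = β := by
        rw [pow_succ, hαq]; linear_combination hβα
      rw [hfact, pow_mul, hαβ, hβ1]
    · have hfact : (2 ^ s) ^ 3 + (2 ^ s) ^ 2 + 2 ^ s + 1
          = ((2 ^ s) ^ 2 + 1) * (2 ^ s + 1) := by ring
      have hα1q : (α + 1) ^ ((2 ^ s) ^ 2) = α := by
        have h2 : ((2 : ℕ) ^ s) ^ 2 = 2 ^ (2 * s) := by rw [← pow_mul, mul_comm]
        rw [h2, add_pow_char_pow α 1 2 (2 * s), one_pow, ← h2, hαq]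
        linear_combination hone
      have hα1β : (α + 1) ^ ((2 ^ s) ^ 2 + 1) = β := by
        rw [pow_succ, hα1q]; linear_combination hβα
      rw [hfact, pow_mul, hα1β, hβ1]
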